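/- Let V ⊆ ℂ⁹ = ℂ³ × ℂ³ × ℂ³ be the common vanishing locus of the nine quadrics x_a y_b − x_b y_a, y_a z_b − y_b z_a, x_a z_b − x_b z_a (for 1 ≤ a < b ≤ 3), i.e. the set of triples (x, y, z) of vectors in ℂ³ that are pairwise proportional (all pairwise 2×2 minors vanish). Then V is an irreducible closed subset of ℂ⁹ in the Zariski topology; indeed V is the Zariski closure of the image of the map ℂ³ × ℂ × ℂ → ℂ⁹ sending (v, s, t) to (v, s·v, t·v). (This is the statement that the master space of dP₀ = ℂ³/ℤ₃ is irreducible.) -/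

import Mathlib

open MvPolynomial

/-- A subset of `ℂ⁹` (points indexed by `Fin 3 × Fin 3`, i.e. triples of vectors in
`ℂ³`) is Zariski closed if it is the common vanishing locus of a set of
polynomials. -/
def ZariskiClosed (Z : Set (Fin 3 × Fin 3 → ℂ)) : Prop :=
  ∃ T : Set (MvPolynomial (Fin 3 × Fin 3) ℂ),
    Z = {x | ∀ p ∈ T, MvPolynomial.eval x p = 0}

/-- The master space of `dP₀ = ℂ³/ℤ₃`: the common vanishing locus in `ℂ⁹` of the
nine quadrics `x_a y_b − x_b y_a`, `y_a z_b − y_b z_a`, `x_a z_b − x_b z_a`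
(`1 ≤ a < b ≤ 3`), where `x = w(0,·)`, `y = w(1,·)`, `z = w(2,·)`; i.e. the set of
triples `(x,y,z)` of vectors of `ℂ³` that are pairwise proportional. -/
def masterSpaceDP0 : Set (Fin 3 × Fin 3 → ℂ) :=
  {w | ∀ a b : Fin 3, a < b →
    (w (0, a) * w (1, b) - w (0, b) * w (1, a) = 0 ∧
      w (1, a) * w (2, b) - w (1, b) * w (2, a) = 0 ∧
      w (0, a) * w (2, b) - w (0, b) * w (2, a) = 0)}

/-- The parametrization `ℂ³ × ℂ × ℂ → ℂ⁹`, `(v, s, t) ↦ (v, s·v, t·v)`. -/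
def dP0Param : (Fin 3 → ℂ) × ℂ × ℂ → (Fin 3 × Fin 3 → ℂ) :=
  fun vst q => ![vst.1 q.2, vst.2.1 * vst.1 q.2, vst.2.2 * vst.1 q.2] q.1

/- ### Auxiliary material -/

/-- The nine defining quadrics. -/
noncomputable def dP0Quadrics : Set (MvPolynomial (Fin 3 × Fin 3) ℂ) :=
  {p | ∃ a b : Fin 3, a < b ∧
    (p = X (0, a) * X (1, b) - X (0, b) * X (1, a) ∨
     p = X (1, a) * X (2, b) - X (1, b) * X (2, a) ∨
     p = X (0, a) * X (2, b) - X (0, b) * X (2, a))}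

lemma masterSpaceDP0_eq_zeroLocus :
    masterSpaceDP0 = {x | ∀ p ∈ dP0Quadrics, MvPolynomial.eval x p = 0} := by
  ext w
  constructor
  · rintro hw p ⟨a, b, hab, h | h | h⟩ <;> subst h <;>
      simp only [map_sub, map_mul, eval_X]
    · exact (hw a b hab).1
    · exact (hw a b hab).2.1
    · exact (hw a b hab).2.2
  · intro h a b hab
    refine ⟨?_, ?_, ?_⟩
    · have := h _ ⟨a, b, hab, Or.inl rfl⟩
      simpa only [map_sub, map_mul, eval_X] using this
    · have := h _ ⟨a, b, hab, Or.inr (Or.inl rfl)⟩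
      simpa only [map_sub, map_mul, eval_X] using this
    · have := h _ ⟨a, b, hab, Or.inr (Or.inr rfl)⟩
      simpa only [map_sub, map_mul, eval_X] using this

lemma zariskiClosed_masterSpaceDP0 : ZariskiClosed masterSpaceDP0 :=
  ⟨dP0Quadrics, masterSpaceDP0_eq_zeroLocus⟩

/-- Limit points of affine lines lie in any Zariski-closed set containing the
punctured line. -/
lemma mem_of_linear_limit {Z : Set (Fin 3 × Fin 3 → ℂ)} (hZ : ZariskiClosed Z)
    (A B : Fin 3 × Fin 3 → ℂ)
    (h : ∀ ε : ℂ, ε ≠ 0 → (fun q => A q + ε * B q) ∈ Z) : A ∈ Z := by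
  obtain ⟨T, rfl⟩ := hZ
  intro p hp
  set q : Polynomial ℂ := MvPolynomial.eval₂ Polynomial.C
      (fun i => Polynomial.C (A i) + Polynomial.X * Polynomial.C (B i)) p with hq
  have key : ∀ ε : ℂ, Polynomial.eval ε q
      = MvPolynomial.eval (fun i => A i + ε * B i) p := by
    intro ε
    rw [hq, ← Polynomial.coe_evalRingHom,
      MvPolynomial.eval₂_comp_left (Polynomial.evalRingHom ε) Polynomial.C _ p]
    have h1 : (Polynomial.evalRingHom ε).comp Polynomial.C = RingHom.id ℂ := by
      ext x; simp
    rw [h1]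
    have h2 : ((Polynomial.evalRingHom ε) ∘
        fun i => Polynomial.C (A i) + Polynomial.X * Polynomial.C (B i))
        = fun i => A i + ε * B i := by
      funext i; simp; ring
    rw [h2]
    rfl
  have hq0 : q = 0 := by
    apply Polynomial.eq_zero_of_infinite_isRoot
    refine Set.Infinite.mono ?_ (Set.infinite_of_finite_compl
      (s := {x : ℂ | x ≠ 0}) (by simp))
    intro ε hε
    have h3 := h ε hε p hp
    show Polynomial.eval ε q = 0
    rw [key ε]
    exact h3
  have := key 0
  rw [hq0] at this
  simp only [Polynomial.eval_zero] at this
  have hA : (fun i => A i + (0 : ℂ) * B i) = A := by funext i; ring_nf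
  rw [hA] at this
  exact this.symm

/-- The parametrization as a family of polynomials in 5 variables. -/
noncomputable def dP0ParamPoly : Fin 3 × Fin 3 → MvPolynomial (Fin 3 ⊕ Fin 2) ℂ :=
  fun i => ![(X (Sum.inl i.2) : MvPolynomial (Fin 3 ⊕ Fin 2) ℂ),
             X (Sum.inr 0) * X (Sum.inl i.2),
             X (Sum.inr 1) * X (Sum.inl i.2)] i.1

lemma eval_dP0ParamPoly (u : Fin 3 ⊕ Fin 2 → ℂ) (i : Fin 3 × Fin 3) :
    MvPolynomial.eval u (dP0ParamPoly i) =
      dP0Param (fun a => u (Sum.inl a), u (Sum.inr 0), u (Sum.inr 1)) i := by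
  obtain ⟨i1, a⟩ := i
  fin_cases i1 <;> simp [dP0ParamPoly, dP0Param]

lemma eval_comp_paramPoly (u : Fin 3 ⊕ Fin 2 → ℂ)
    (p : MvPolynomial (Fin 3 × Fin 3) ℂ) :
    MvPolynomial.eval u (MvPolynomial.eval₂ MvPolynomial.C dP0ParamPoly p)
      = MvPolynomial.eval
          (dP0Param (fun a => u (Sum.inl a), u (Sum.inr 0), u (Sum.inr 1))) p := by
  rw [MvPolynomial.eval₂_comp_left (MvPolynomial.eval u) MvPolynomial.C dP0ParamPoly p]
  have h1 : (MvPolynomial.eval u).comp (MvPolynomial.C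
      (σ := Fin 3 ⊕ Fin 2) (R := ℂ)) = RingHom.id ℂ := by
    ext x; simp
  rw [h1]
  have h2 : ((MvPolynomial.eval u) ∘ dP0ParamPoly)
      = dP0Param (fun a => u (Sum.inl a), u (Sum.inr 0), u (Sum.inr 1)) := by
    funext i; exact eval_dP0ParamPoly u i
  rw [h2]
  rfl

lemma range_dP0Param_subset : Set.range dP0Param ⊆ masterSpaceDP0 := by
  rintro _ ⟨⟨v, s, t⟩, rfl⟩ a b _
  refine ⟨?_, ?_, ?_⟩ <;> simp [dP0Param] <;> ring

/-- All-pairs versions of the minors. -/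
lemma minor01 {w : Fin 3 × Fin 3 → ℂ} (hw : w ∈ masterSpaceDP0) (a b : Fin 3) :
    w (0, a) * w (1, b) = w (0, b) * w (1, a) := by
  rcases lt_trichotomy a b with h | h | h
  · linear_combination (hw a b h).1
  · subst h; ring
  · linear_combination -(hw b a h).1

lemma minor12 {w : Fin 3 × Fin 3 → ℂ} (hw : w ∈ masterSpaceDP0) (a b : Fin 3) :
    w (1, a) * w (2, b) = w (1, b) * w (2, a) := by
  rcases lt_trichotomy a b with h | h | h
  · linear_combination (hw a b h).2.1
  · subst h; ring
  · linear_combination -(hw b a h).2.1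

lemma minor02 {w : Fin 3 × Fin 3 → ℂ} (hw : w ∈ masterSpaceDP0) (a b : Fin 3) :
    w (0, a) * w (2, b) = w (0, b) * w (2, a) := by
  rcases lt_trichotomy a b with h | h | h
  · linear_combination (hw a b h).2.2
  · subst h; ring
  · linear_combination -(hw b a h).2.2

/-- Every point of the master space lies in every Zariski-closed set containing
the image of the parametrization. -/
lemma masterSpaceDP0_subset_closed {Z : Set (Fin 3 × Fin 3 → ℂ)}
    (hZ : ZariskiClosed Z) (hr : Set.range dP0Param ⊆ Z) :
    masterSpaceDP0 ⊆ Z := by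
  intro w hw
  by_cases hx : ∃ k : Fin 3, w (0, k) ≠ 0
  · -- x ≠ 0 : w is in the range of the parametrization
    obtain ⟨k, hk⟩ := hx
    apply hr
    refine ⟨(fun a => w (0, a), w (1, k) / w (0, k), w (2, k) / w (0, k)), ?_⟩
    funext q
    obtain ⟨i, a⟩ := q
    fin_cases i
    · simp [dP0Param]
    · show w (1, k) / w (0, k) * w (0, a) = w (1, a)
      field_simp
      linear_combination minor01 hw a k
    · show w (2, k) / w (0, k) * w (0, a) = w (2, a)
      field_simp
      linear_combination minor02 hw a k
  · push_neg at hx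
    by_cases hy : ∃ k : Fin 3, w (1, k) ≠ 0
    · -- x = 0, y ≠ 0 : w = (0, y, t·y) is a limit of (ε·y, y, t·y)
      obtain ⟨k, hk⟩ := hy
      set t : ℂ := w (2, k) / w (1, k) with ht
      have hz : ∀ a, w (2, a) = t * w (1, a) := by
        intro a
        rw [ht]
        field_simp
        linear_combination minor12 hw k a
      apply mem_of_linear_limit hZ w (fun q => ![w (1, q.2), 0, 0] q.1)
      intro ε hε
      apply hr
      refine ⟨(fun a => ε * w (1, a), ε⁻¹, t * ε⁻¹), ?_⟩
      funext q
      obtain ⟨i, a⟩ := q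
      fin_cases i
      · show ε * w (1, a) = w (0, a) + ε * w (1, a)
        rw [hx a]; ring
      · show ε⁻¹ * (ε * w (1, a)) = w (1, a) + ε * 0
        field_simp
        ring
      · show t * ε⁻¹ * (ε * w (1, a)) = w (2, a) + ε * 0
        rw [hz a]
        field_simp
        ring
    · -- x = 0, y = 0 : w = (0, 0, z) is a limit of (ε·z, 0, z)
      push_neg at hy
      apply mem_of_linear_limit hZ w (fun q => ![w (2, q.2), 0, 0] q.1)
      intro ε hε
      apply hr
      refine ⟨(fun a => ε * w (2, a), 0, ε⁻¹), ?_⟩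
      funext q
      obtain ⟨i, a⟩ := q
      fin_cases i
      · show ε * w (2, a) = w (0, a) + ε * w (2, a)
        rw [hx a]; ring
      · show (0 : ℂ) * (ε * w (2, a)) = w (1, a) + ε * 0
        rw [hy a]; ring
      · show ε⁻¹ * (ε * w (2, a)) = w (2, a) + ε * 0
        field_simp
        ring

/-- The master space of `dP₀ = ℂ³/ℤ₃` is an irreducible closed
subset of `ℂ⁹` in the Zariski topology (it is nonempty and cannot be covered by two
Zariski-closed sets without being contained in one of them), and it is the Zariski
closure of the image of `(v,s,t) ↦ (v, s·v, t·v)`, i.e. the intersection of all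
Zariski-closed sets containing that image. -/
theorem masterSpaceDP0_irreducible :
    ZariskiClosed masterSpaceDP0 ∧
    masterSpaceDP0.Nonempty ∧
    (∀ Z₁ Z₂ : Set (Fin 3 × Fin 3 → ℂ), ZariskiClosed Z₁ → ZariskiClosed Z₂ →
      masterSpaceDP0 ⊆ Z₁ ∪ Z₂ → masterSpaceDP0 ⊆ Z₁ ∨ masterSpaceDP0 ⊆ Z₂) ∧
    masterSpaceDP0 = ⋂₀ {Z | ZariskiClosed Z ∧ Set.range dP0Param ⊆ Z} := by
  refine ⟨zariskiClosed_masterSpaceDP0, ⟨0, by intro a b _; norm_num⟩, ?_, ?_⟩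
  · -- irreducibility
    intro Z₁ Z₂ hZ₁ hZ₂ hsub
    by_contra hcon
    push_neg at hcon
    obtain ⟨hn1, hn2⟩ := hcon
    -- the range is not contained in either Z₁ or Z₂
    have hr1 : ¬ Set.range dP0Param ⊆ Z₁ := fun h =>
      hn1 (masterSpaceDP0_subset_closed hZ₁ h)
    have hr2 : ¬ Set.range dP0Param ⊆ Z₂ := fun h =>
      hn2 (masterSpaceDP0_subset_closed hZ₂ h)
    obtain ⟨T₁, rfl⟩ := hZ₁
    obtain ⟨T₂, rfl⟩ := hZ₂
    rw [Set.not_subset] at hr1 hr2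
    obtain ⟨w₁, ⟨u₁, rfl⟩, hw1⟩ := hr1
    obtain ⟨w₂, ⟨u₂, rfl⟩, hw2⟩ := hr2
    simp only [Set.mem_setOf_eq, not_forall] at hw1 hw2
    obtain ⟨p₁, hp₁T, hp₁⟩ := hw1
    obtain ⟨p₂, hp₂T, hp₂⟩ := hw2
    -- encode the parameters as points of ℂ⁵
    set enc : (Fin 3 → ℂ) × ℂ × ℂ → (Fin 3 ⊕ Fin 2 → ℂ) :=
      fun u => Sum.elim u.1 ![u.2.1, u.2.2] with henc
    have hdec : ∀ u : (Fin 3 → ℂ) × ℂ × ℂ,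
        (fun a => enc u (Sum.inl a), enc u (Sum.inr 0), enc u (Sum.inr 1)) = u := by
      rintro ⟨v, s, t⟩; rfl
    set F₁ : MvPolynomial (Fin 3 ⊕ Fin 2) ℂ :=
      MvPolynomial.eval₂ MvPolynomial.C dP0ParamPoly p₁ with hF₁
    set F₂ : MvPolynomial (Fin 3 ⊕ Fin 2) ℂ :=
      MvPolynomial.eval₂ MvPolynomial.C dP0ParamPoly p₂ with hF₂
    have hF₁ne : F₁ ≠ 0 := by
      intro h0
      apply hp₁
      have := eval_comp_paramPoly (enc u₁) p₁
      rw [← hF₁, h0, map_zero, hdec u₁] at this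
      exact this.symm
    have hF₂ne : F₂ ≠ 0 := by
      intro h0
      apply hp₂
      have := eval_comp_paramPoly (enc u₂) p₂
      rw [← hF₂, h0, map_zero, hdec u₂] at this
      exact this.symm
    have hprod : F₁ * F₂ ≠ 0 := mul_ne_zero hF₁ne hF₂ne
    have : ∃ v : Fin 3 ⊕ Fin 2 → ℂ, MvPolynomial.eval v (F₁ * F₂) ≠ 0 := by
      by_contra h0
      push_neg at h0
      apply hprod
      apply MvPolynomial.funext
      intro v
      rw [h0 v, map_zero]
    obtain ⟨v, hv⟩ := this
    rw [map_mul] at hv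
    have hv1 : MvPolynomial.eval v F₁ ≠ 0 := fun h => hv (by rw [h, zero_mul])
    have hv2 : MvPolynomial.eval v F₂ ≠ 0 := fun h => hv (by rw [h, mul_zero])
    set u : (Fin 3 → ℂ) × ℂ × ℂ :=
      (fun a => v (Sum.inl a), v (Sum.inr 0), v (Sum.inr 1)) with hu
    have he1 : MvPolynomial.eval (dP0Param u) p₁ ≠ 0 := by
      rw [hu]
      rw [hF₁, eval_comp_paramPoly v p₁] at hv1
      exact hv1
    have he2 : MvPolynomial.eval (dP0Param u) p₂ ≠ 0 := by
      rw [hu]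
      rw [hF₂, eval_comp_paramPoly v p₂] at hv2
      exact hv2
    have hmem : dP0Param u ∈ masterSpaceDP0 := range_dP0Param_subset ⟨u, rfl⟩
    rcases hsub hmem with h | h
    · exact he1 (h p₁ hp₁T)
    · exact he2 (h p₂ hp₂T)
  · -- closure description
    apply Set.Subset.antisymm
    · intro w hw
      rw [Set.mem_sInter]
      rintro Z ⟨hZc, hZr⟩
      exact masterSpaceDP0_subset_closed hZc hZr hw
    · exact Set.sInter_subset_of_mem ⟨zariskiClosed_masterSpaceDP0,
        range_dP0Param_subset⟩
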